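/- Let ν be a probability measure on a compact interval [χ_1, χ_2], let μ be a finite positive measure on [χ_1, χ_2] with Lebesgue decomposition dμ = g dν + dμ_s (μ_s singular w.r.t. ν), and let a > 0. Define Ĩ(μ) = ∫ (j_a(g) − g) dν + μ([χ_1, χ_2]) where j_a(x) = x − a − a log(x/a) for x > 0, j_a(x) = +∞ otherwise. Then for a probability measure ξ on [χ_1, χ_2], inf_{b > 0} Ĩ(b·ξ) = a·K(ν | ξ), the reversed Kullback information. -/

import Mathlib

open MeasureTheory Classical ENNReal

/-- `j_a(x) = x - a - a·log(x/a)` for `x > 0`, `+∞` otherwise (as an extended real). -/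
noncomputable def jaE (a x : ℝ) : ℝ≥0∞ :=
  if 0 < x then ENNReal.ofReal (x - a - a * Real.log (x / a)) else ⊤

/-- `Ĩ(μ) = ∫ (j_a(g) - g) dν + μ(univ)` where `dμ = g dν + dμ_s` is the Lebesgue
decomposition of `μ` with respect to `ν` (written here as
`∫ j_a(g) dν + (μ(univ) - ∫ g dν)`, the last term being the singular mass). -/
noncomputable def Itilde (a : ℝ) (ν μ : Measure ℝ) : ℝ≥0∞ :=
  ∫⁻ t, jaE a ((μ.rnDeriv ν t).toReal) ∂ν + (μ Set.univ - ∫⁻ t, μ.rnDeriv ν t ∂ν)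

/-- Reversed Kullback information `K(ν|ξ) = ∫ log(dν/dξ) dν` if `ν ≪ ξ` and the
log-likelihood ratio is integrable, `+∞` otherwise. -/
noncomputable def kullbackE (P Q : Measure ℝ) : ℝ≥0∞ :=
  if P ≪ Q ∧ Integrable (llr P Q) P then ENNReal.ofReal (∫ x, llr P Q x ∂P) else ⊤

lemma ja_nonneg {a x : ℝ} (ha : 0 < a) (hx : 0 < x) :
    0 ≤ x - a - a * Real.log (x / a) := by
  have h := Real.log_le_sub_one_of_pos (div_pos hx ha)
  have h2 : a * Real.log (x / a) ≤ a * (x / a - 1) :=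
    mul_le_mul_of_nonneg_left h ha.le
  have h3 : a * (x / a - 1) = x - a := by field_simp
  linarith [h2.trans_eq h3]

/-- For probability measures `ν, ξ` on a compact interval `[χ₁, χ₂]` and `a > 0`,
`inf_{b > 0} Ĩ(b·ξ) = a·K(ν | ξ)`. -/
theorem inf_Itilde_eq_reversed_kullback
    (χ₁ χ₂ : ℝ) (hχ : χ₁ ≤ χ₂) (a : ℝ) (ha : 0 < a)
    (ν ξ : Measure ℝ) [IsProbabilityMeasure ν] [IsProbabilityMeasure ξ]
    (hν : ν (Set.Icc χ₁ χ₂)ᶜ = 0) (hξ : ξ (Set.Icc χ₁ χ₂)ᶜ = 0) :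
    (⨅ b : {b : ℝ // 0 < b}, Itilde a ν (ENNReal.ofReal b.1 • ξ))
      = ENNReal.ofReal a * kullbackE ν ξ := by
  classical
  set g : ℝ → ℝ := fun t => (ξ.rnDeriv ν t).toReal with hg_def
  have hg_meas : Measurable g := (Measure.measurable_rnDeriv ξ ν).ennreal_toReal
  have hg_int : Integrable g ν := Measure.integrable_toReal_rnDeriv
  -- rnDeriv of the scaled measure
  have hsmul : ∀ b : ℝ, 0 < b →
      ((ENNReal.ofReal b • ξ).rnDeriv ν) =ᵐ[ν] fun t => ENNReal.ofReal b * ξ.rnDeriv ν t := by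
    intro b hb
    filter_upwards [Measure.rnDeriv_smul_left_of_ne_top ξ ν (r := ENNReal.ofReal b)
      ENNReal.ofReal_ne_top] with t ht
    simpa [Pi.smul_apply, smul_eq_mul] using ht
  by_cases hac : ν ≪ ξ
  · -- absolutely continuous case
    have hgpos : ∀ᵐ t ∂ν, 0 < ξ.rnDeriv ν t := Measure.rnDeriv_pos' hac
    have hglt : ∀ᵐ t ∂ν, ξ.rnDeriv ν t < ∞ := Measure.rnDeriv_lt_top ξ ν
    have hgRpos : ∀ᵐ t ∂ν, 0 < g t := by
      filter_upwards [hgpos, hglt] with t h1 h2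
      exact ENNReal.toReal_pos h1.ne' h2.ne
    have hllr : llr ν ξ =ᵐ[ν] fun t => -Real.log (g t) := by
      have h := neg_llr hac
      filter_upwards [h] with t ht
      have : -llr ν ξ t = llr ξ ν t := ht
      have h2 : llr ξ ν t = Real.log (g t) := rfl
      linarith [this, h2 ▸ this]
    -- pointwise identity for the integrand
    have key : ∀ b : ℝ, 0 < b →
        (fun t => jaE a (((ENNReal.ofReal b • ξ).rnDeriv ν t).toReal))
          =ᵐ[ν] fun t => ENNReal.ofReal
            (b * g t - a * Real.log (g t) - (a + a * Real.log b - a * Real.log a)) := by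
      intro b hb
      filter_upwards [hsmul b hb, hgRpos, hglt] with t ht hpos hlt
      have htoReal : ((ENNReal.ofReal b • ξ).rnDeriv ν t).toReal = b * g t := by
        rw [ht, ENNReal.toReal_mul, ENNReal.toReal_ofReal hb.le]
      have hbg : 0 < b * g t := mul_pos hb hpos
      rw [htoReal, jaE, if_pos hbg]
      congr 1
      rw [Real.log_div hbg.ne' ha.ne', Real.log_mul hb.ne' hpos.ne']
      ring
    have key_nonneg : ∀ b : ℝ, 0 < b → ∀ᵐ t ∂ν,
        0 ≤ b * g t - a * Real.log (g t) - (a + a * Real.log b - a * Real.log a) := by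
      intro b hb
      filter_upwards [hgRpos] with t hpos
      have hbg : 0 < b * g t := mul_pos hb hpos
      have := ja_nonneg ha hbg
      rw [Real.log_div hbg.ne' ha.ne', Real.log_mul hb.ne' hpos.ne'] at this
      linarith
    by_cases hint : Integrable (llr ν ξ) ν
    · -- integrable case: full computation
      have hlogint : Integrable (fun t => Real.log (g t)) ν := by
        have h0 : Integrable (fun t => -Real.log (g t)) ν := hint.congr hllr
        exact h0.neg.congr (Filter.Eventually.of_forall fun t => by simp)
      set K : ℝ := ∫ x, llr ν ξ x ∂ν with hK_def
      have hL : ∫ t, Real.log (g t) ∂ν = -K := by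
        have h1 : ∫ t, llr ν ξ t ∂ν = ∫ t, -Real.log (g t) ∂ν := integral_congr_ae hllr
        rw [integral_neg] at h1
        rw [hK_def]; linarith
      -- the lintegral bookkeeping for the mass term
      set C : ℝ≥0∞ := ∫⁻ t, ξ.rnDeriv ν t ∂ν with hC_def
      have hC1 : C ≤ 1 := by
        calc C ≤ ξ Set.univ := Measure.lintegral_rnDeriv_le
        _ = 1 := measure_univ
      have hCtop : C ≠ ∞ := (hC1.trans_lt (by norm_num)).ne
      set c : ℝ := C.toReal with hc_def
      have hc_int : ∫ t, g t ∂ν = c := by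
        rw [hg_def, hc_def, hC_def]
        exact integral_toReal (Measure.measurable_rnDeriv ξ ν).aemeasurable hglt
      have hc0 : 0 ≤ c := ENNReal.toReal_nonneg
      have hc1 : c ≤ 1 := by
        have := ENNReal.toReal_mono (by norm_num : (1 : ℝ≥0∞) ≠ ∞) hC1
        simpa using this
      have hItilde : ∀ b : ℝ, ∀ hb : 0 < b,
          Itilde a ν (ENNReal.ofReal b • ξ)
            = ENNReal.ofReal ((b - a - a * Real.log (b / a)) + a * K) := by
        intro b hb
        set ψ : ℝ → ℝ := fun t =>
          b * g t - a * Real.log (g t) - (a + a * Real.log b - a * Real.log a) with hψ_def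
        have hψ_int : Integrable ψ ν :=
          ((hg_int.const_mul b).sub (hlogint.const_mul a)).sub (integrable_const _)
        have hψ_nn : 0 ≤ᵐ[ν] ψ := key_nonneg b hb
        have h1 : ∫⁻ t, jaE a (((ENNReal.ofReal b • ξ).rnDeriv ν t).toReal) ∂ν
            = ENNReal.ofReal (∫ t, ψ t ∂ν) := by
          rw [lintegral_congr_ae (key b hb),
            ← ofReal_integral_eq_lintegral_ofReal hψ_int hψ_nn]
        have i1 : Integrable (fun t => b * g t) ν := hg_int.const_mul b
        have i2 : Integrable (fun t => a * Real.log (g t)) ν := hlogint.const_mul a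
        have i3 : Integrable (fun t => b * g t - a * Real.log (g t)) ν := i1.sub i2
        have hψ_val : ∫ t, ψ t ∂ν = b * c + a * K - (a + a * Real.log b - a * Real.log a) := by
          simp only [hψ_def]
          rw [integral_sub i3 (integrable_const _), integral_sub i1 i2,
            integral_const_mul, integral_const_mul, hc_int, hL, integral_const]
          simp only [measure_univ, probReal_univ, ENNReal.toReal_one, smul_eq_mul, one_mul]
          ring
        have hψ_nonneg_int : 0 ≤ ∫ t, ψ t ∂ν := integral_nonneg_of_ae hψ_nn
        -- second term
        have h2 : ∫⁻ t, (ENNReal.ofReal b • ξ).rnDeriv ν t ∂ν = ENNReal.ofReal b * C := by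
          rw [lintegral_congr_ae (hsmul b hb), lintegral_const_mul _ (Measure.measurable_rnDeriv ξ ν)]
        have hmass : (ENNReal.ofReal b • ξ) Set.univ = ENNReal.ofReal b := by
          simp [Measure.smul_apply, smul_eq_mul, measure_univ]
        have h3 : (ENNReal.ofReal b • ξ) Set.univ
              - ∫⁻ t, (ENNReal.ofReal b • ξ).rnDeriv ν t ∂ν
            = ENNReal.ofReal (b * (1 - c)) := by
          rw [hmass, h2]
          have hCc : C = ENNReal.ofReal c := by
            rw [hc_def, ENNReal.ofReal_toReal hCtop]
          rw [hCc, ← ENNReal.ofReal_mul hb.le,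
            show ENNReal.ofReal b = ENNReal.ofReal (b * 1) by ring_nf,
            ← ENNReal.ofReal_sub _ (by positivity : (0:ℝ) ≤ b * c)]
          ring_nf
        rw [Itilde, h1, h3, ← ENNReal.ofReal_add hψ_nonneg_int (by nlinarith)]
        congr 1
        rw [hψ_val, Real.log_div hb.ne' ha.ne']
        ring
      -- now compute the infimum
      have hK_RHS : kullbackE ν ξ = ENNReal.ofReal K := by
        rw [kullbackE, if_pos ⟨hac, hint⟩]
      rw [hK_RHS, ← ENNReal.ofReal_mul ha.le]
      apply le_antisymm
      · refine iInf_le_of_le ⟨a, ha⟩ ?_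
        rw [hItilde a ha]
        simp [div_self ha.ne', Real.log_one]
      · refine le_iInf fun b => ?_
        rw [hItilde b.1 b.2]
        apply ENNReal.ofReal_le_ofReal
        have := ja_nonneg ha b.2
        linarith
    · -- llr not integrable : both sides are ⊤
      have hRHS : kullbackE ν ξ = ⊤ := by
        rw [kullbackE, if_neg (fun h => hint h.2)]
      rw [hRHS, ENNReal.mul_top (ENNReal.ofReal_pos.mpr ha).ne']
      rw [iInf_eq_top]
      rintro ⟨b, hb⟩
      have hψ_meas : Measurable (fun t =>
          b * g t - a * Real.log (g t) - (a + a * Real.log b - a * Real.log a)) :=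
        ((hg_meas.const_mul b).sub ((Real.measurable_log.comp hg_meas).const_mul a)).sub
          measurable_const
      have htop : ∫⁻ t, jaE a (((ENNReal.ofReal b • ξ).rnDeriv ν t).toReal) ∂ν = ⊤ := by
        by_contra h
        rw [lintegral_congr_ae (key b hb)] at h
        -- then ψ would be integrable, hence log g integrable, hence llr integrable
        set ψ : ℝ → ℝ := fun t =>
          b * g t - a * Real.log (g t) - (a + a * Real.log b - a * Real.log a) with hψ_def
        have hψ_int : Integrable ψ ν := by
          refine ⟨hψ_meas.aestronglyMeasurable, ?_⟩
          rw [hasFiniteIntegral_iff_ofReal (key_nonneg b hb)]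
          exact lt_top_iff_ne_top.mpr h
        have hlogint : Integrable (fun t => Real.log (g t)) ν := by
          have h2 : Integrable (fun t =>
              (b * g t - ψ t - (a + a * Real.log b - a * Real.log a)) / a) ν :=
            (((hg_int.const_mul b).sub hψ_int).sub (integrable_const _)).div_const a
          refine h2.congr (Filter.Eventually.of_forall fun t => ?_)
          simp only [hψ_def]
          field_simp
          ring
        exact hint ((hlogint.neg.congr hllr.symm))
      rw [Itilde, htop, top_add]
  · -- not absolutely continuous : both sides are ⊤
    have hRHS : kullbackE ν ξ = ⊤ := by
      rw [kullbackE, if_neg (fun h => hac h.1)]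
    rw [hRHS, ENNReal.mul_top (ENNReal.ofReal_pos.mpr ha).ne']
    rw [iInf_eq_top]
    rintro ⟨b, hb⟩
    set A : Set ℝ := {t | ξ.rnDeriv ν t = 0} with hA_def
    have hA_meas : MeasurableSet A := (Measure.measurable_rnDeriv ξ ν) (measurableSet_singleton 0)
    have hA_pos : ν A ≠ 0 := by
      intro hA0
      apply hac
      refine Measure.AbsolutelyContinuous.mk fun s hs hs0 => ?_
      have hsl : ∫⁻ t in s, ξ.rnDeriv ν t ∂ν = 0 :=
        le_antisymm ((Measure.setLIntegral_rnDeriv_le s).trans hs0.le) zero_le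
      have hae : ∀ᵐ t ∂(ν.restrict s), ξ.rnDeriv ν t = 0 :=
        (lintegral_eq_zero_iff (Measure.measurable_rnDeriv ξ ν)).mp hsl
      have h1 : ν.restrict s Aᶜ = 0 := by
        simpa [hA_def, Set.compl_setOf] using ae_iff.mp hae
      have h2 : ν (Aᶜ ∩ s) = 0 := by
        rwa [Measure.restrict_apply hA_meas.compl] at h1
      have : s ⊆ A ∪ (Aᶜ ∩ s) := by
        intro t ht
        by_cases htA : t ∈ A
        · exact Or.inl htA
        · exact Or.inr ⟨htA, ht⟩
      refine le_antisymm ?_ zero_le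
      calc ν s ≤ ν (A ∪ (Aᶜ ∩ s)) := measure_mono this
      _ ≤ ν A + ν (Aᶜ ∩ s) := measure_union_le _ _
      _ ≤ 0 := by rw [hA0, h2, add_zero]
    have hae_top : ∀ᵐ t ∂(ν.restrict A),
        jaE a (((ENNReal.ofReal b • ξ).rnDeriv ν t).toReal) = ⊤ := by
      filter_upwards [ae_restrict_of_ae (hsmul b hb), ae_restrict_mem hA_meas] with t ht htA
      have : ξ.rnDeriv ν t = 0 := htA
      rw [ht, this, mul_zero]
      simp [jaE]
    have htop : ∫⁻ t, jaE a (((ENNReal.ofReal b • ξ).rnDeriv ν t).toReal) ∂ν = ⊤ := by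
      refine top_le_iff.mp ?_
      calc (⊤ : ℝ≥0∞) = ∫⁻ _ in A, ⊤ ∂ν := by
            rw [setLIntegral_const, ENNReal.top_mul hA_pos]
      _ = ∫⁻ t in A, jaE a (((ENNReal.ofReal b • ξ).rnDeriv ν t).toReal) ∂ν :=
            (lintegral_congr_ae hae_top).symm
      _ ≤ ∫⁻ t, jaE a (((ENNReal.ofReal b • ξ).rnDeriv ν t).toReal) ∂ν :=
            setLIntegral_le_lintegral _ _
    rw [Itilde, htop, top_add]
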